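/- Let ρ : A_ℂ → End(V) be a finite-dimensional irreducible representation of the complexified fusion ring A_ℂ with formal codegree α_ρ (so ρ(z_ρ) = α_ρ·id_V). Then for all a₁, a₂ ∈ A_ℂ: Σ_{i∈I} Tr(ρ(a₁ b_i)) · Tr(ρ(b_{i*} a₂)) = α_ρ · Tr(ρ(a₁ a₂)). -/

import Mathlib

open scoped BigOperators

/-- A fusion ring datum: finite index set `I`, unit index `zero`, duality involution `dual`,
and structure constants `N` satisfying associativity, unit, duality and symmetry axioms. -/
structure FusionData (I : Type*) [Fintype I] [DecidableEq I] where
  zero : I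
  dual : I → I
  N : I → I → I → ℕ
  dual_dual : ∀ i, dual (dual i) = i
  dual_zero : dual zero = zero
  assoc : ∀ i j k l, ∑ m, N i j m * N m k l = ∑ m, N j k m * N i m l
  unit_left : ∀ j m, N zero j m = if j = m then 1 else 0
  unit_right : ∀ i m, N i zero m = if i = m then 1 else 0
  duality : ∀ i j, N i j zero = if j = dual i then 1 else 0
  sym1 : ∀ i j m, N i j m = N j (dual m) (dual i)
  sym2 : ∀ i j m, N i j m = N (dual m) i (dual j)
  sym3 : ∀ i j m, N i j m = N (dual j) (dual i) (dual m)


/-- Lemma on traces: for an irreducible finite-dimensional representation `ρ` of the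
complexified fusion ring `A` (given as a ℂ-algebra with basis `b i` satisfying the fusion
rules) whose formal codegree is `α` (i.e. `ρ (z_ρ) = α • 1`), one has
`∑ i, Tr(ρ (a₁ * b i)) * Tr(ρ (b i* * a₂)) = α * Tr(ρ (a₁ * a₂))`. -/
theorem trace_codegree_identity {I : Type*} [Fintype I] [DecidableEq I]
    (F : FusionData I)
    {A : Type*} [Ring A] [Algebra ℂ A] (b : Module.Basis I ℂ A)
    (hb1 : b F.zero = 1)
    (hbmul : ∀ i j, b i * b j = ∑ m, (F.N i j m : ℂ) • b m)
    {V : Type*} [AddCommGroup V] [Module ℂ V] [FiniteDimensional ℂ V] [Nontrivial V]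
    (ρ : A →ₐ[ℂ] Module.End ℂ V)
    (hirr : ∀ W : Submodule ℂ V, (∀ a : A, ∀ v ∈ W, ρ a v ∈ W) → W = ⊥ ∨ W = ⊤)
    (α : ℂ)
    (hα : ρ (∑ i, (LinearMap.trace ℂ V (ρ (b i))) • b (F.dual i))
            = α • (1 : Module.End ℂ V))
    (a₁ a₂ : A) :
    ∑ i, (LinearMap.trace ℂ V (ρ (a₁ * b i))) * (LinearMap.trace ℂ V (ρ (b (F.dual i) * a₂)))
      = α * LinearMap.trace ℂ V (ρ (a₁ * a₂)) := by
  classical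
  -- the trace functional a ↦ Tr(ρ a), as a linear map
  set T : A →ₗ[ℂ] ℂ := (LinearMap.trace ℂ V).comp ρ.toLinearMap with hTdef
  have hT : ∀ x : A, T x = LinearMap.trace ℂ V (ρ x) := fun x => rfl
  -- the element z_ρ
  set z : A := ∑ i, T (b i) • b (F.dual i) with hz
  have hρz : ρ z = α • (1 : Module.End ℂ V) := by
    rw [hz]; simp only [hT]; exact hα
  -- the duality involution, as an equivalence
  let e : I ≃ I := ⟨F.dual, F.dual, fun x => F.dual_dual x, fun x => F.dual_dual x⟩
  -- the linear map a ↦ ∑ i, T (a * b i) • b (dual i)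
  let L : A →ₗ[ℂ] A :=
    { toFun := fun a => ∑ i, T (a * b i) • b (F.dual i)
      map_add' := by
        intro x y
        simp [add_mul, add_smul, Finset.sum_add_distrib]
      map_smul' := by
        intro c x
        simp [smul_mul_assoc, smul_smul, Finset.smul_sum] }
  -- key: L = left multiplication by z
  have hL : L = LinearMap.mulLeft ℂ z := by
    apply b.ext
    intro j
    show (∑ i, T (b j * b i) • b (F.dual i)) = z * b j
    have lhs_eq : (∑ i, T (b j * b i) • b (F.dual i))
        = ∑ i, ∑ m, ((F.N j i m : ℂ) * T (b m)) • b (F.dual i) := by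
      refine Finset.sum_congr rfl fun i _ => ?_
      rw [hbmul, map_sum, Finset.sum_smul]
      refine Finset.sum_congr rfl fun m _ => ?_
      rw [map_smul, smul_eq_mul]
    have rhs_eq : z * b j
        = ∑ m, ∑ k, ((F.N (F.dual m) j k : ℂ) * T (b m)) • b k := by
      rw [hz, Finset.sum_mul]
      refine Finset.sum_congr rfl fun m _ => ?_
      rw [smul_mul_assoc, hbmul, Finset.smul_sum]
      refine Finset.sum_congr rfl fun k _ => ?_
      rw [smul_smul, mul_comm]
    rw [lhs_eq, rhs_eq]
    conv_rhs => rw [Finset.sum_comm]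
    refine Fintype.sum_equiv e _ _ fun i => ?_
    refine Finset.sum_congr rfl fun m _ => ?_
    have hsym : F.N j i m = F.N (F.dual m) j (F.dual i) := F.sym2 j i m
    simp only [e, Equiv.coe_fn_mk, hsym]
  have key : (∑ i, T (a₁ * b i) • b (F.dual i)) = z * a₁ := by
    have := LinearMap.congr_fun hL a₁
    simpa [L, LinearMap.mulLeft_apply] using this
  have h1 : ∑ i, (LinearMap.trace ℂ V (ρ (a₁ * b i)))
        * (LinearMap.trace ℂ V (ρ (b (F.dual i) * a₂)))
      = T ((∑ i, T (a₁ * b i) • b (F.dual i)) * a₂) := by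
    rw [Finset.sum_mul]
    simp only [smul_mul_assoc, map_sum, map_smul, smul_eq_mul, hT]
  rw [h1, key, mul_assoc, hT, map_mul, hρz, smul_mul_assoc, one_mul, map_smul, smul_eq_mul]
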